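/- Let t ≥ s ≥ 2 be integers with C(t−s, 2) ≤ s − 1. Then for all positive reals x, y with x ≠ y, 2((x+y)/2)^{s+t−2} > x^{s−1} y^{t−1} + x^{t−1} y^{s−1}. -/

import Mathlib

open Finset

lemma two_mul_choose_two (n : ℕ) : 2 * n.choose 2 = n * (n - 1) := by
  induction n with
  | zero => rfl
  | succ m ih =>
    rw [Nat.choose_succ_succ, Nat.mul_add, ih, Nat.choose_one_right]
    cases m with
    | zero => rfl
    | succ p =>
      simp only [Nat.succ_sub_one, Nat.add_sub_cancel]
      ring

lemma choose_two_add (d j : ℕ) : d.choose 2 + j ≤ (d + 2*j).choose 2 := by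
  induction j with
  | zero => simp
  | succ p ih =>
    have h1 : d + 2*(p+1) = (d + 2*p + 1) + 1 := by ring
    rw [h1]
    have h2 : (d + 2*p + 1 + 1).choose 2 = (d+2*p+1).choose 1 + (d+2*p+1).choose 2 :=
      Nat.choose_succ_succ _ _
    have h3 : (d + 2*p + 1).choose 2 = (d+2*p).choose 1 + (d+2*p).choose 2 :=
      Nat.choose_succ_succ _ _
    simp only [Nat.choose_one_right] at h2 h3
    omega

lemma choose_double_le (k j : ℕ) : k.choose (2*j) ≤ (k.choose 2).choose j := by
  induction j with
  | zero => simp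
  | succ p ih =>
    by_cases hk : k < 2*(p+1)
    · rw [Nat.choose_eq_zero_of_lt hk]; exact Nat.zero_le _
    · push_neg at hk
      set m := k.choose 2 with hm
      set q := k - 2*p with hq
      have hq2 : 2 ≤ q := by omega
      have hgap : q.choose 2 + p ≤ m := by
        have h := choose_two_add q p
        have : q + 2*p = k := by omega
        rwa [this] at h
      have e1 : k.choose (2*p+1) * (2*p+1) = k.choose (2*p) * (k - 2*p) :=
        Nat.choose_succ_right_eq k (2*p)
      have e2 : k.choose (2*p+2) * (2*p+2) = k.choose (2*p+1) * (k - (2*p+1)) :=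
        Nat.choose_succ_right_eq k (2*p+1)
      have e3 : m.choose (p+1) * (p+1) = m.choose p * (m - p) :=
        Nat.choose_succ_right_eq m p
      have hq1 : k - (2*p+1) = q - 1 := by omega
      rw [hq1] at e2
      rw [← hq] at e1
      have e4 : k.choose (2*p+2) * ((2*p+2)*(2*p+1)) = k.choose (2*p) * (q * (q-1)) := by
        calc k.choose (2*p+2) * ((2*p+2)*(2*p+1))
            = (k.choose (2*p+2) * (2*p+2)) * (2*p+1) := by ring
          _ = (k.choose (2*p+1) * (q-1)) * (2*p+1) := by rw [e2]
          _ = (k.choose (2*p+1) * (2*p+1)) * (q-1) := by ring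
          _ = (k.choose (2*p) * q) * (q-1) := by rw [e1]
          _ = k.choose (2*p) * (q * (q-1)) := by ring
      have hqq : q * (q - 1) ≤ 2 * (m - p) := by
        have h2m := two_mul_choose_two q
        have : q.choose 2 ≤ m - p := by omega
        calc q * (q-1) = 2 * q.choose 2 := h2m.symm
          _ ≤ 2 * (m - p) := by omega
      have hfin : k.choose (2*p+2) * ((2*p+2)*(2*p+1)) ≤ m.choose (p+1) * ((2*p+2)*(2*p+1)) := by
        calc k.choose (2*p+2) * ((2*p+2)*(2*p+1))
            = k.choose (2*p) * (q*(q-1)) := e4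
          _ ≤ m.choose p * (2*(m-p)) := Nat.mul_le_mul ih hqq
          _ = (m.choose p * (m-p)) * 2 := by ring
          _ = (m.choose (p+1) * (p+1)) * 2 := by rw [e3]
          _ ≤ m.choose (p+1) * ((2*p+2)*(2*p+1)) := by
              have : (p+1) * 2 ≤ (2*p+2)*(2*p+1) := by nlinarith
              calc (m.choose (p+1) * (p+1)) * 2 = m.choose (p+1) * ((p+1)*2) := by ring
                _ ≤ m.choose (p+1) * ((2*p+2)*(2*p+1)) := Nat.mul_le_mul_left _ this
      have hpos : 0 < (2*p+2)*(2*p+1) := by positivity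
      have := Nat.le_of_mul_le_mul_right (by simpa using hfin) hpos
      simpa [show 2*(p+1) = 2*p+2 by ring] using this

lemma sum_range_two_mul (F : ℕ → ℝ) (n : ℕ) :
    ∑ i ∈ range (2*n), F i = ∑ j ∈ range n, (F (2*j) + F (2*j+1)) := by
  induction n with
  | zero => simp
  | succ p ih =>
    have h : 2*(p+1) = 2*p + 1 + 1 := by ring
    rw [h, Finset.sum_range_succ, Finset.sum_range_succ, Finset.sum_range_succ, ih]
    ring

lemma even_expand (k : ℕ) (u : ℝ) :
    (1+u)^k + (1-u)^k = ∑ j ∈ range (k+1), 2 * (k.choose (2*j) : ℝ) * (u^2)^j := by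
  have h1 : (1+u)^k = ∑ i ∈ range (k+1), u^i * (k.choose i : ℝ) := by
    rw [show (1+u) = u + 1 by ring, add_pow]; simp
  have h2 : (1-u)^k = ∑ i ∈ range (k+1), (-u)^i * (k.choose i : ℝ) := by
    rw [show (1-u) = (-u) + 1 by ring, add_pow]; simp
  rw [h1, h2, ← Finset.sum_add_distrib]
  have h3 : ∀ i ∈ range (k+1), u^i * (k.choose i:ℝ) + (-u)^i * (k.choose i:ℝ)
      = (1 + (-1)^i) * u^i * (k.choose i:ℝ) := by
    intro i _; rw [neg_pow]; ring
  rw [Finset.sum_congr rfl h3]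
  have h4 : ∑ i ∈ range (k+1), (1 + (-1:ℝ)^i) * u^i * (k.choose i:ℝ)
      = ∑ i ∈ range (2*(k+1)), (1 + (-1:ℝ)^i) * u^i * (k.choose i:ℝ) := by
    apply Finset.sum_subset
    · apply Finset.range_subset_range.2; omega
    · intro i _ hi
      simp only [Finset.mem_range, not_lt] at hi
      rw [Nat.choose_eq_zero_of_lt (by omega)]
      simp
  rw [h4, sum_range_two_mul]
  apply Finset.sum_congr rfl
  intro j _
  have he : ((-1:ℝ))^(2*j) = 1 := by rw [pow_mul]; norm_num
  have ho : ((-1:ℝ))^(2*j+1) = -1 := by rw [pow_succ, he]; norm_num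
  rw [he, ho]
  rw [show u^(2*j) = (u^2)^j by rw [← pow_mul]]
  ring

lemma binom_tail (m N : ℕ) (v : ℝ) (hv : 0 ≤ v) :
    ∑ j ∈ range N, (m.choose j : ℝ) * v ^ j ≤ (1+v)^m := by
  have hfull : (1+v)^m = ∑ j ∈ range (N + (m+1)), (m.choose j : ℝ) * v ^ j := by
    rw [show (1+v) = v+1 by ring, add_pow]
    simp only [one_pow, mul_one]
    rw [Finset.sum_congr rfl (fun i _ => by rw [mul_comm] :
      ∀ i ∈ range (m+1), v^i * (m.choose i:ℝ) = (m.choose i:ℝ) * v^i)]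
    apply Finset.sum_subset
    · apply Finset.range_subset_range.2; omega
    · intro i _ hi
      simp only [Finset.mem_range, not_lt] at hi
      rw [Nat.choose_eq_zero_of_lt (by omega)]; simp
  rw [hfull]
  apply Finset.sum_le_sum_of_subset_of_nonneg
  · apply Finset.range_subset_range.2; omega
  · intro i _ _
    positivity

/-- For integers `t ≥ s ≥ 2` with `C(t−s,2) ≤ s−1` and distinct positive reals `x, y`:
`2((x+y)/2)^{s+t−2} > x^{s−1} y^{t−1} + x^{t−1} y^{s−1}`. -/
theorem sidorenko_type_inequality (s t : ℕ) (hs : 2 ≤ s) (hst : s ≤ t)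
    (hC : Nat.choose (t - s) 2 ≤ s - 1)
    (x y : ℝ) (hx : 0 < x) (hy : 0 < y) (hxy : x ≠ y) :
    2 * ((x + y) / 2) ^ (s + t - 2) > x ^ (s - 1) * y ^ (t - 1) + x ^ (t - 1) * y ^ (s - 1) := by
  set k := t - s with hkk
  set a := s - 1 with haa
  set b := t - 1 with hbb
  have hab : s + t - 2 = a + b := by omega
  have hba : b = a + k := by omega
  have ha1 : 1 ≤ a := by omega
  set m := k.choose 2 with hmm
  have hma : m ≤ a := hC
  rw [hab]
  have hxy2 : (0:ℝ) < x + y := by linarith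
  set c : ℝ := (x+y)/2 with hc
  have hc0 : 0 < c := by positivity
  set u : ℝ := (x - y)/(x + y) with hu
  have hxc : x = c * (1 + u) := by
    rw [hc, hu]
    field_simp
    ring
  have hyc : y = c * (1 - u) := by
    rw [hc, hu]
    field_simp
    ring
  set v : ℝ := u^2 with hv
  have hu0 : u ≠ 0 := by
    rw [hu]
    intro h
    apply hxy
    have : x - y = 0 := by
      field_simp at h
      linarith
    linarith
  have hv0 : 0 < v := by positivity
  have hv1 : v < 1 := by
    have h1 : |u| < 1 := by
      rw [hu, abs_div, abs_of_pos hxy2, div_lt_one hxy2, abs_lt]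
      constructor <;> linarith
    calc v = |u|^2 := by rw [sq_abs]
      _ < 1 := by nlinarith [abs_nonneg u]
  have hS : (1+u)^k + (1-u)^k ≤ 2 * (1+v)^a := by
    rw [even_expand k u, ← hv]
    calc ∑ j ∈ range (k+1), 2*(k.choose (2*j):ℝ)*v^j
        ≤ ∑ j ∈ range (k+1), 2*(m.choose j:ℝ)*v^j := by
          apply Finset.sum_le_sum
          intro j _
          have h1 : (k.choose (2*j):ℝ) ≤ (m.choose j:ℝ) := by
            exact_mod_cast choose_double_le k j
          have h2 : (0:ℝ) ≤ v^j := by positivity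
          nlinarith
      _ = 2 * ∑ j ∈ range (k+1), (m.choose j:ℝ)*v^j := by
          rw [Finset.mul_sum]
          apply Finset.sum_congr rfl
          intro j _; ring
      _ ≤ 2 * (1+v)^m := by
          have := binom_tail m (k+1) v hv0.le
          linarith
      _ ≤ 2 * (1+v)^a := by
          have := pow_le_pow_right₀ (by linarith : (1:ℝ) ≤ 1+v) hma
          linarith
  have h1v : 0 < 1 - v := by linarith
  have hpa : (0:ℝ) < (1-v)^a := by positivity
  have key : (1-v)^a * ((1+u)^k + (1-u)^k) < 2 := by
    calc (1-v)^a * ((1+u)^k + (1-u)^k) ≤ (1-v)^a * (2*(1+v)^a) :=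
          mul_le_mul_of_nonneg_left hS hpa.le
      _ = 2 * ((1-v)*(1+v))^a := by rw [mul_pow]; ring
      _ = 2 * (1 - v^2)^a := by rw [show (1-v)*(1+v) = 1 - v^2 by ring]
      _ < 2 * 1 := by
          have : (1-v^2)^a < 1 := pow_lt_one₀ (by nlinarith) (by nlinarith) (by omega)
          linarith
      _ = 2 := by ring
  have hfac : (1-v) = (1+u)*(1-u) := by rw [hv]; ring
  have e1 : x^a*y^b = c^(a+b) * ((1-v)^a * (1-u)^k) := by
    rw [hxc, hyc, hba, mul_pow, mul_pow, pow_add c, pow_add (1-u), hfac, mul_pow]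
    ring
  have e2 : x^b*y^a = c^(a+b) * ((1-v)^a * (1+u)^k) := by
    rw [hxc, hyc, hba, mul_pow, mul_pow, pow_add c, pow_add (1+u), hfac, mul_pow]
    ring
  have hcp : (0:ℝ) < c^(a+b) := pow_pos hc0 _
  have hkey2 : c^(a+b) * ((1-v)^a * ((1+u)^k + (1-u)^k)) < c^(a+b) * 2 :=
    mul_lt_mul_of_pos_left key hcp
  calc x^a*y^b + x^b*y^a
      = c^(a+b) * ((1-v)^a * ((1+u)^k + (1-u)^k)) := by rw [e1, e2]; ring
    _ < c^(a+b) * 2 := hkey2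
    _ = 2 * c^(a+b) := by ring
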